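/- Let Q(x) = x₁² + ··· + x_p² - x_{p+1}² - ··· - x_{p+q}² with p+q = d and let ρ > 0. Then there exist nonzero vectors u₁, ..., u_p with Q(u_j) = 0 for all j such that (S_ρ, H_{u₁} ∪ ··· ∪ H_{u_p}) is a Heisenberg uniqueness pair, where S_ρ = {x : Q(x) = ρ}. -/

import Mathlib

open MeasureTheory Complex
open scoped RealInnerProductSpace

noncomputable def FT {d : ℕ} (μ : Measure (EuclideanSpace ℝ (Fin d)))
    (ξ : EuclideanSpace ℝ (Fin d)) : ℂ :=
  ∫ x, Complex.exp (Complex.I * (⟪x, ξ⟫ : ℝ)) ∂μ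

/-- `(S, Λ)` is a Heisenberg uniqueness pair: any two finite measures supported
in `S` whose Fourier transforms agree on `Λ` are equal (equivalently, every finite
signed measure supported in `S` with Fourier transform vanishing on `Λ` is zero). -/
def IsHUP {d : ℕ} (S Λ : Set (EuclideanSpace ℝ (Fin d))) : Prop :=
  ∀ μ ν : Measure (EuclideanSpace ℝ (Fin d)), IsFiniteMeasure μ → IsFiniteMeasure ν →
    μ Sᶜ = 0 → ν Sᶜ = 0 → (∀ ξ ∈ Λ, FT μ ξ = FT ν ξ) → μ = ν

/-- The indefinite quadratic form `x₁² + ⋯ + x_p² - x_{p+1}² - ⋯ - x_d²`. -/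
def Qpq {d : ℕ} (p : ℕ) (x : EuclideanSpace ℝ (Fin d)) : ℝ :=
  ∑ j : Fin d, (if (j : ℕ) < p then 1 else -1) * x j ^ 2

/-- The bilinear form associated with `Qpq`. -/
def Bpq {d : ℕ} (p : ℕ) (x y : EuclideanSpace ℝ (Fin d)) : ℝ :=
  ∑ j : Fin d, (if (j : ℕ) < p then 1 else -1) * (x j * y j)


section Unique
open SchwartzMap Filter
open scoped FourierTransform

lemma FT_def {d : ℕ} (μ : Measure (EuclideanSpace ℝ (Fin d))) (ξ : EuclideanSpace ℝ (Fin d)) :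
    FT μ ξ = ∫ x, Complex.exp (Complex.I * (⟪x, ξ⟫ : ℝ)) ∂μ := rfl

/-- Smooth compactly supported functions are Schwartz. -/
noncomputable def toSchwartz {V : Type*} [NormedAddCommGroup V] [NormedSpace ℝ V]
    (f : V → ℂ) (hf : ContDiff ℝ ((⊤ : ℕ∞) : WithTop ℕ∞) f) (h2 : HasCompactSupport f) : SchwartzMap V ℂ where
  toFun := f
  smooth' := hf
  decay' := by
    intro k n
    have hcs : HasCompactSupport ((fun x : V => ‖x‖ ^ k) * fun x => ‖iteratedFDeriv ℝ n f x‖) :=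
      ((h2.iteratedFDeriv n).norm).mul_left
    have hcont : Continuous ((fun x : V => ‖x‖ ^ k) * fun x => ‖iteratedFDeriv ℝ n f x‖) :=
      (continuous_norm.pow k).mul (hf.continuous_iteratedFDeriv (by exact_mod_cast le_top)).norm
    obtain ⟨C, hC⟩ := hcont.bounded_above_of_compact_support hcs
    refine ⟨C, fun x => le_trans (le_abs_self _) ?_⟩
    have := hC x
    rwa [Real.norm_eq_abs] at this

@[simp] lemma toSchwartz_apply {V : Type*} [NormedAddCommGroup V] [NormedSpace ℝ V]
    (f : V → ℂ) (hf : ContDiff ℝ ((⊤ : ℕ∞) : WithTop ℕ∞) f) (h2 : HasCompactSupport f) (x : V) :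
    toSchwartz f hf h2 x = f x := rfl

theorem integral_eq_of_FT_eq {d : ℕ} {μ ν : Measure (EuclideanSpace ℝ (Fin d))}
    [IsFiniteMeasure μ] [IsFiniteMeasure ν]
    (h : ∀ ξ, FT μ ξ = FT ν ξ) (f : SchwartzMap (EuclideanSpace ℝ (Fin d)) ℂ) :
    ∫ x, f x ∂μ = ∫ x, f x ∂ν := by
  set g := fourierTransformCLM ℂ (V := EuclideanSpace ℝ (Fin d)) f with hgdef
  have hinv : ∀ x, f x = ∫ v, Complex.exp (((2 * Real.pi * ⟪v, x⟫ : ℝ) : ℂ) * Complex.I) • g v := by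
    intro x
    conv_lhs => rw [← congrFun (Continuous.fourierInv_fourier_eq f.continuous f.integrable
      (fourierTransformCLM ℂ f).integrable) x]
    rw [Real.fourierInv_eq']
    rfl
  have key : ∀ (κ : Measure (EuclideanSpace ℝ (Fin d))), IsFiniteMeasure κ →
      ∫ x, f x ∂κ = ∫ v, (FT κ ((2 * Real.pi) • v)) • g v := by
    intro κ hκ
    have hcont : Continuous (Function.uncurry fun (x v : EuclideanSpace ℝ (Fin d)) =>
        Complex.exp (((2 * Real.pi * ⟪v, x⟫ : ℝ) : ℂ) * Complex.I) • g v) := by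
      apply Continuous.fun_smul
      · exact Complex.continuous_exp.comp ((Complex.continuous_ofReal.comp
          (continuous_const.mul ((continuous_snd.inner continuous_fst)))).mul continuous_const)
      · exact g.continuous.comp continuous_snd
    have hdom : Integrable (fun z : EuclideanSpace ℝ (Fin d) × EuclideanSpace ℝ (Fin d) =>
        (1 : ℝ) * ‖g z.2‖) (κ.prod volume) :=
      (integrable_const (1:ℝ)).mul_prod g.integrable.norm
    have hint : Integrable (Function.uncurry fun (x v : EuclideanSpace ℝ (Fin d)) =>
        Complex.exp (((2 * Real.pi * ⟪v, x⟫ : ℝ) : ℂ) * Complex.I) • g v) (κ.prod volume) := by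
      refine hdom.mono' hcont.aestronglyMeasurable (Filter.Eventually.of_forall ?_)
      rintro ⟨x, v⟩
      show ‖Complex.exp (((2 * Real.pi * ⟪v, x⟫ : ℝ) : ℂ) * Complex.I) • g v‖ ≤ 1 * ‖g v‖
      rw [norm_smul, Complex.norm_exp_ofReal_mul_I]
    calc ∫ x, f x ∂κ
        = ∫ x, ∫ v, Complex.exp (((2 * Real.pi * ⟪v, x⟫ : ℝ) : ℂ) * Complex.I) • g v ∂volume ∂κ :=
          integral_congr_ae (Filter.Eventually.of_forall fun x => hinv x)
      _ = ∫ v, ∫ x, Complex.exp (((2 * Real.pi * ⟪v, x⟫ : ℝ) : ℂ) * Complex.I) • g v ∂κ ∂volume :=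
          integral_integral_swap hint
      _ = ∫ v, (FT κ ((2 * Real.pi) • v)) • g v := by
          refine integral_congr_ae (Filter.Eventually.of_forall fun v => ?_)
          simp only [smul_eq_mul]
          rw [MeasureTheory.integral_mul_const]
          congr 1
          rw [FT_def]
          refine integral_congr_ae (Filter.Eventually.of_forall fun x => ?_)
          have h1 : ⟪x, (2 * Real.pi) • v⟫ = 2 * Real.pi * ⟪v, x⟫ := by
            rw [real_inner_smul_right, real_inner_comm]
          show Complex.exp (((2 * Real.pi * ⟪v, x⟫ : ℝ) : ℂ) * Complex.I)
              = Complex.exp (Complex.I * ((⟪x, (2 * Real.pi) • v⟫ : ℝ) : ℂ))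
          rw [h1, mul_comm]
  rw [key μ ‹_›, key ν ‹_›]
  refine integral_congr_ae (Filter.Eventually.of_forall fun v => ?_)
  show FT μ ((2 * Real.pi) • v) • g v = FT ν ((2 * Real.pi) • v) • g v
  rw [h]

end Unique

section Unique2
open SchwartzMap Filter Metric Topology
open scoped FourierTransform

/-- Smooth cutoff functions approximating the indicator of a compact set. -/
lemma exists_cutoff {d : ℕ} {K : Set (EuclideanSpace ℝ (Fin d))} (hK : IsCompact K)
    {δ : ℝ} (hδ : 0 < δ) :
    ∃ f : EuclideanSpace ℝ (Fin d) → ℝ, ContDiff ℝ ((⊤ : ℕ∞) : WithTop ℕ∞) f ∧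
      HasCompactSupport f ∧ Set.EqOn f 1 K ∧ (∀ x, f x ∈ Set.Icc (0:ℝ) 1) ∧
      ∀ x ∉ Metric.thickening δ K, f x = 0 := by
  have hs : IsClosed (Metric.thickening δ K)ᶜ := (Metric.isOpen_thickening).isClosed_compl
  have hd : Disjoint (Metric.thickening δ K)ᶜ K :=
    Set.disjoint_left.mpr fun x hx hxK => hx (Metric.self_subset_thickening hδ K hxK)
  obtain ⟨f, hf0, hf1, hf01⟩ := exists_contMDiffMap_zero_one_of_isClosed (n := (⊤ : ℕ∞))
    (modelWithCornersSelf ℝ (EuclideanSpace ℝ (Fin d))) hs hK.isClosed hd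
  refine ⟨f, contMDiff_iff_contDiff.mp f.contMDiff, ?_, hf1, hf01, fun x hx => hf0 hx⟩
  apply HasCompactSupport.of_support_subset_isCompact (hK.cthickening (r := δ))
  intro x hx
  by_contra hmem
  exact hx (hf0 fun h => hmem (Metric.thickening_subset_cthickening δ K h))

theorem meas_ext_of_FT {d : ℕ} (μ ν : Measure (EuclideanSpace ℝ (Fin d)))
    [IsFiniteMeasure μ] [IsFiniteMeasure ν]
    (h : ∀ ξ, FT μ ξ = FT ν ξ) : μ = ν := by
  classical
  -- equality on compact sets
  have hcomp : ∀ K : Set (EuclideanSpace ℝ (Fin d)), IsCompact K → μ K = ν K := by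
    intro K hK
    have hδ : ∀ n : ℕ, (0:ℝ) < 1/(n+1) := fun n => by positivity
    choose F hFsm hFcs hF1 hF01 hF0 using fun n : ℕ => exists_cutoff hK (hδ n)
    -- convergence of integrals for any finite measure
    have hconv : ∀ (κ : Measure (EuclideanSpace ℝ (Fin d))), IsFiniteMeasure κ →
        Tendsto (fun n => ∫ x, F n x ∂κ) atTop (𝓝 ((κ K).toReal)) := by
      intro κ hκ
      have hlim : ∀ x, Tendsto (fun n => F n x) atTop (𝓝 (K.indicator (fun _ => (1:ℝ)) x)) := by
        intro x
        by_cases hx : x ∈ K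
        · simp only [Set.indicator_of_mem hx]
          exact Tendsto.congr (fun n => (hF1 n hx).symm) tendsto_const_nhds
        · simp only [Set.indicator_of_notMem hx]
          rcases K.eq_empty_or_nonempty with rfl | hne
          · exact Tendsto.congr
              (fun n => (hF0 n x (by simp [Metric.thickening_empty])).symm) tendsto_const_nhds
          · have hpos : 0 < Metric.infDist x K :=
              (hK.isClosed.notMem_iff_infDist_pos hne).mp hx
            have hev : ∀ᶠ n : ℕ in atTop, F n x = 0 := by
              filter_upwards [(tendsto_one_div_add_atTop_nhds_zero_nat).eventually
                (gt_mem_nhds hpos)] with n hn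
              refine hF0 n x fun hmem => ?_
              exact absurd ((Metric.mem_thickening_iff_infDist_lt hne).mp hmem) (not_lt.mpr hn.le)
            exact Tendsto.congr' (by filter_upwards [hev] with n hn using hn.symm)
              tendsto_const_nhds
      have := tendsto_integral_of_dominated_convergence (μ := κ)
        (F := fun n x => F n x) (f := K.indicator (fun _ => (1:ℝ))) (fun _ => (1:ℝ))
        (fun n => ((hFsm n).continuous).aestronglyMeasurable)
        (integrable_const 1)
        (fun n => Filter.Eventually.of_forall fun x => by
          show ‖F n x‖ ≤ (1:ℝ)
          rw [Real.norm_eq_abs, abs_le]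
          exact ⟨by linarith [(hF01 n x).1], (hF01 n x).2⟩)
        (Filter.Eventually.of_forall hlim)
      rwa [integral_indicator_const (1:ℝ) hK.isClosed.measurableSet, smul_eq_mul, mul_one] at this
    -- the integrals agree
    have heq : ∀ n, ∫ x, F n x ∂μ = ∫ x, F n x ∂ν := by
      intro n
      have hofr : ContDiff ℝ ((⊤ : ℕ∞) : WithTop ℕ∞) (fun x => ((F n x : ℝ) : ℂ)) :=
        Complex.ofRealCLM.contDiff.comp (hFsm n)
      have hcs : HasCompactSupport (fun x => ((F n x : ℝ) : ℂ)) :=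
        HasCompactSupport.comp_left (g := fun r : ℝ => (r : ℂ)) (hFcs n) Complex.ofReal_zero
      have hthis := integral_eq_of_FT_eq h (toSchwartz _ hofr hcs)
      simp only [toSchwartz_apply] at hthis
      have h2 : ((∫ x, F n x ∂μ : ℝ) : ℂ) = ((∫ x, F n x ∂ν : ℝ) : ℂ) :=
        (integral_ofReal.symm.trans hthis).trans integral_ofReal
      exact_mod_cast h2
    have := tendsto_nhds_unique ((hconv μ ‹_›).congr fun n => heq n) (hconv ν ‹_›)
    exact (ENNReal.toReal_eq_toReal_iff' (measure_ne_top μ K) (measure_ne_top ν K)).mp this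
  -- equality on closed sets
  have hclosed : ∀ F : Set (EuclideanSpace ℝ (Fin d)), IsClosed F → μ F = ν F := by
    intro F hF
    have hmono : Monotone (fun n : ℕ => F ∩ Metric.closedBall 0 n) := fun a b hab =>
      Set.inter_subset_inter_right F
        (Metric.closedBall_subset_closedBall (by exact_mod_cast hab))
    have hUn : (⋃ n : ℕ, F ∩ Metric.closedBall 0 n) = F := by
      ext x
      simp only [Set.mem_iUnion, Set.mem_inter_iff, Metric.mem_closedBall]
      constructor
      · rintro ⟨n, hn, -⟩; exact hn
      · intro hx
        obtain ⟨n, hn⟩ := exists_nat_ge (dist x 0)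
        exact ⟨n, hx, hn⟩
    have h1 := tendsto_measure_iUnion_atTop (μ := μ) hmono
    have h2 := tendsto_measure_iUnion_atTop (μ := ν) hmono
    rw [hUn] at h1 h2
    have hee : (⇑μ ∘ fun n : ℕ => F ∩ Metric.closedBall 0 n)
        = (⇑ν ∘ fun n : ℕ => F ∩ Metric.closedBall 0 n) := by
      funext n
      exact hcomp _ ((isCompact_closedBall 0 n).inter_left hF)
    rw [hee] at h1
    exact tendsto_nhds_unique h1 h2
  -- conclude
  refine ext_of_generate_finite {s | IsClosed s} ?_ isPiSystem_isClosed
    (fun s hs => hclosed s hs) (hclosed _ isClosed_univ)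
  rw [BorelSpace.measurable_eq (α := EuclideanSpace ℝ (Fin d)), borel_eq_generateFrom_isClosed]

end Unique2


lemma Qpq_expand {d : ℕ} (p : ℕ) (x u : EuclideanSpace ℝ (Fin d)) (t : ℝ) :
    Qpq p (x + t • u) = Qpq p x + 2*t*(Bpq p x u) + t^2 * Qpq p u := by
  simp only [Qpq, Bpq, PiLp.add_apply, PiLp.smul_apply, smul_eq_mul, Finset.mul_sum]
  rw [← Finset.sum_add_distrib, ← Finset.sum_add_distrib]
  exact Finset.sum_congr rfl fun i _ => by ring

section Proj
variable {d : ℕ}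

noncomputable def projP (u : EuclideanSpace ℝ (Fin d)) :
    EuclideanSpace ℝ (Fin d) →L[ℝ] EuclideanSpace ℝ (Fin d) :=
  (Submodule.span ℝ {u})ᗮ.subtypeL ∘L Submodule.orthogonalProjectionOnto (Submodule.span ℝ {u})ᗮ

lemma projP_inner (u x ξ : EuclideanSpace ℝ (Fin d)) :
    ⟪projP u x, ξ⟫ = ⟪x, projP u ξ⟫ :=
  Submodule.inner_starProjection_left_eq_right _ x ξ

lemma projP_inner_u (u ξ : EuclideanSpace ℝ (Fin d)) : ⟪projP u ξ, u⟫ = 0 := by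
  have h1 : (projP u ξ) ∈ (Submodule.span ℝ {u})ᗮ :=
    (Submodule.orthogonalProjectionOnto (Submodule.span ℝ {u})ᗮ ξ).2
  rw [real_inner_comm]
  exact ((Submodule.mem_orthogonal (Submodule.span ℝ {u}) _).mp h1) u
    (Submodule.mem_span_singleton_self u)

lemma projP_eq_iff {u x y : EuclideanSpace ℝ (Fin d)} (h : projP u x = projP u y) :
    ∃ t : ℝ, x = y + t • u := by
  have h0 : Submodule.orthogonalProjectionOnto (Submodule.span ℝ {u})ᗮ (x - y) = 0 := by
    have hz : projP u (x - y) = 0 := by rw [map_sub, h, sub_self]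
    exact ZeroMemClass.coe_eq_zero.mp hz
  have h2 : x - y ∈ Submodule.span ℝ {u} := by
    have h3 := Submodule.orthogonalProjectionOnto_eq_zero_iff.mp h0
    rwa [Submodule.orthogonal_orthogonal] at h3
  obtain ⟨t, ht⟩ := Submodule.mem_span_singleton.mp h2
  exact ⟨t, by rw [ht]; abel⟩

end Proj

section Geometry
open Finset

lemma single_pair_apply {d : ℕ} (a b i : Fin d) :
    ((EuclideanSpace.single a (1:ℝ) + EuclideanSpace.single b 1 : EuclideanSpace ℝ (Fin d))) i
      = (if i = a then (1:ℝ) else 0) + (if i = b then (1:ℝ) else 0) := by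
  simp [EuclideanSpace.single_apply]

lemma single_pair_ne_zero {d : ℕ} (a b : Fin d) (hab : a ≠ b) :
    (EuclideanSpace.single a (1:ℝ) + EuclideanSpace.single b 1) ≠ 0 := by
  intro hz
  have h1 := congrArg (fun v : EuclideanSpace ℝ (Fin d) => v a) hz
  simp [single_pair_apply, hab] at h1

lemma Qpq_single_pair {d p : ℕ} (a b : Fin d) (hab : a ≠ b)
    (ha : (a:ℕ) < p) (hb : ¬ (b:ℕ) < p) :
    Qpq p (EuclideanSpace.single a (1:ℝ) + EuclideanSpace.single b 1) = 0 := by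
  classical
  have hterm : ∀ i : Fin d, (if (i : ℕ) < p then (1:ℝ) else -1)
        * (((EuclideanSpace.single a (1:ℝ) + EuclideanSpace.single b 1 : EuclideanSpace ℝ (Fin d))) i) ^ 2
      = (if i = a then (1:ℝ) else 0) + (if i = b then (-1:ℝ) else 0) := by
    intro i
    rw [single_pair_apply]
    by_cases hia : i = a
    · subst hia
      simp [ha, hab]
    · by_cases hib : i = b
      · subst hib
        simp [hb, hia]
      · simp [hia, hib]
  rw [Qpq, Finset.sum_congr rfl fun i _ => hterm i, Finset.sum_add_distrib,
    Finset.sum_ite_eq' Finset.univ a (fun _ => (1:ℝ)),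
    Finset.sum_ite_eq' Finset.univ b (fun _ => (-1:ℝ))]
  simp

lemma Bpq_single_pair {d p : ℕ} (a b : Fin d) (hab : a ≠ b)
    (ha : (a:ℕ) < p) (hb : ¬ (b:ℕ) < p) (x : EuclideanSpace ℝ (Fin d)) :
    Bpq p x (EuclideanSpace.single a (1:ℝ) + EuclideanSpace.single b 1) = x a - x b := by
  classical
  have hterm : ∀ i : Fin d, (if (i : ℕ) < p then (1:ℝ) else -1)
        * (x i * ((EuclideanSpace.single a (1:ℝ) + EuclideanSpace.single b 1 : EuclideanSpace ℝ (Fin d))) i)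
      = (if i = a then x a else 0) + (if i = b then (-(x b)) else 0) := by
    intro i
    rw [single_pair_apply]
    by_cases hia : i = a
    · subst hia
      simp [ha, hab]
    · by_cases hib : i = b
      · subst hib
        simp [hb, hia]
      · simp [hia, hib]
  rw [Bpq, Finset.sum_congr rfl fun i _ => hterm i, Finset.sum_add_distrib,
    Finset.sum_ite_eq' Finset.univ a (fun _ => x a),
    Finset.sum_ite_eq' Finset.univ b (fun _ => (-(x b)))]
  simp [sub_eq_add_neg]

lemma Qpq_nonpos {d p : ℕ} (x : EuclideanSpace ℝ (Fin d))
    (A B : Fin p → Fin d) (hA : ∀ j, (A j : ℕ) = (j : ℕ)) (hB : ∀ j, (B j : ℕ) = p + (j : ℕ))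
    (hall : ∀ j, x (A j) = x (B j)) : Qpq p x ≤ 0 := by
  classical
  set pos := Finset.univ.filter (fun i : Fin d => (i:ℕ) < p) with hpos
  set neg := Finset.univ.filter (fun i : Fin d => ¬ (i:ℕ) < p) with hneg
  have e1 : ∑ i ∈ pos, (if (i : ℕ) < p then (1:ℝ) else -1) * x i ^ 2 = ∑ i ∈ pos, x i ^ 2 :=
    Finset.sum_congr rfl fun i hi => by
      rw [if_pos (Finset.mem_filter.mp hi).2, one_mul]
  have e2 : ∑ i ∈ neg, (if (i : ℕ) < p then (1:ℝ) else -1) * x i ^ 2 = -∑ i ∈ neg, x i ^ 2 := by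
    rw [← Finset.sum_neg_distrib]
    exact Finset.sum_congr rfl fun i hi => by
      rw [if_neg (Finset.mem_filter.mp hi).2]; ring
  have hsplit : Qpq p x = (∑ i ∈ pos, x i ^ 2) - ∑ i ∈ neg, x i ^ 2 := by
    rw [Qpq, ← Finset.sum_filter_add_sum_filter_not Finset.univ (fun i : Fin d => (i:ℕ) < p)
      (fun i => (if (i : ℕ) < p then (1:ℝ) else -1) * x i ^ 2), ← hpos, ← hneg, e1, e2,
      sub_eq_add_neg]
  have hAinj : ∀ j ∈ Finset.univ, ∀ j' ∈ Finset.univ, A j = A j' → j = j' := by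
    intro j _ j' _ h
    have := congrArg Fin.val h
    rw [hA, hA] at this
    exact Fin.ext this
  have hBinj : ∀ j ∈ Finset.univ, ∀ j' ∈ Finset.univ, B j = B j' → j = j' := by
    intro j _ j' _ h
    have := congrArg Fin.val h
    rw [hB, hB] at this
    exact Fin.ext (by omega)
  have hposim : pos = Finset.image A Finset.univ := by
    ext i
    simp only [hpos, Finset.mem_filter, Finset.mem_univ, true_and, Finset.mem_image]
    constructor
    · intro hi
      exact ⟨⟨(i:ℕ), hi⟩, by exact Fin.ext (hA _)⟩
    · rintro ⟨j, -, rfl⟩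
      rw [hA]; exact j.2
  have h1 : ∑ i ∈ pos, x i ^ 2 = ∑ j : Fin p, x (A j) ^ 2 := by
    rw [hposim, Finset.sum_image hAinj]
  have hBsub : Finset.image B Finset.univ ⊆ neg := by
    intro i hi
    simp only [Finset.mem_image] at hi
    obtain ⟨j, -, rfl⟩ := hi
    simp only [hneg, Finset.mem_filter, Finset.mem_univ, true_and]
    rw [hB]; omega
  have h2 : ∑ j : Fin p, x (B j) ^ 2 ≤ ∑ i ∈ neg, x i ^ 2 :=
    calc ∑ j : Fin p, x (B j) ^ 2
        = ∑ i ∈ Finset.image B Finset.univ, x i ^ 2 := (Finset.sum_image (f := fun i => x i ^ 2) hBinj).symm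
      _ ≤ ∑ i ∈ neg, x i ^ 2 :=
          Finset.sum_le_sum_of_subset_of_nonneg hBsub (fun i _ _ => sq_nonneg _)
  have h3 : ∑ j : Fin p, x (A j) ^ 2 = ∑ j : Fin p, x (B j) ^ 2 :=
    Finset.sum_congr rfl fun j _ => by rw [hall j]
  linarith

end Geometry

/-- Proposition 4.3 (i): for `ρ > 0` there exist `p` nonzero isotropic vectors whose
hyperplanes together with `S_ρ` form a Heisenberg uniqueness pair. -/
theorem stmt_15 {d p q : ℕ} (hp : 1 ≤ p) (hpq' : p ≤ q) (hq : q ≤ d - 1)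
    (hpq : p + q = d) (ρ : ℝ) (hρ : 0 < ρ) :
    ∃ u : Fin p → EuclideanSpace ℝ (Fin d),
      (∀ j, u j ≠ 0) ∧ (∀ j, Qpq p (u j) = 0) ∧
      IsHUP {x : EuclideanSpace ℝ (Fin d) | Qpq p x = ρ}
        (⋃ j, {ξ : EuclideanSpace ℝ (Fin d) | ⟪ξ, u j⟫ = 0}) := by
  classical
  have hpd : p ≤ d := by omega
  have hbd : ∀ j : Fin p, p + (j : ℕ) < d := fun j => by have := j.2; omega
  set A : Fin p → Fin d := fun j => ⟨(j:ℕ), lt_of_lt_of_le j.2 hpd⟩ with hAdef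
  set B : Fin p → Fin d := fun j => ⟨p + (j:ℕ), hbd j⟩ with hBdef
  have hA : ∀ j, (A j : ℕ) = (j:ℕ) := fun j => rfl
  have hB : ∀ j, (B j : ℕ) = p + (j:ℕ) := fun j => rfl
  have hAB : ∀ j, A j ≠ B j := fun j => by
    intro h
    have := congrArg Fin.val h
    rw [hA, hB] at this
    omega
  have hAlt : ∀ j, ((A j : ℕ)) < p := fun j => j.2
  have hBnlt : ∀ j, ¬ ((B j : ℕ)) < p := fun j => by rw [hB]; omega
  set u : Fin p → EuclideanSpace ℝ (Fin d) := fun j =>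
    EuclideanSpace.single (A j) 1 + EuclideanSpace.single (B j) 1 with hudef
  have hQu0 : ∀ j, Qpq p (u j) = 0 := fun j =>
    Qpq_single_pair _ _ (hAB j) (hAlt j) (hBnlt j)
  have hBval : ∀ (x : EuclideanSpace ℝ (Fin d)) (j : Fin p),
      Bpq p x (u j) = x (A j) - x (B j) := fun x j =>
    Bpq_single_pair _ _ (hAB j) (hAlt j) (hBnlt j) x
  refine ⟨u, fun j => single_pair_ne_zero _ _ (hAB j), hQu0, ?_⟩
  intro μ ν hμfin hνfin hμS hνS hFT
  haveI := hμfin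
  haveI := hνfin
  have hcoordc : ∀ i : Fin d, Continuous fun x : EuclideanSpace ℝ (Fin d) => x i :=
    fun i => (EuclideanSpace.proj (𝕜 := ℝ) i).continuous
  have hQc : Continuous fun x : EuclideanSpace ℝ (Fin d) => Qpq p x := by
    unfold Qpq
    exact continuous_finset_sum _ fun i _ => continuous_const.mul ((hcoordc i).pow 2)
  have hBc : ∀ v : EuclideanSpace ℝ (Fin d),
      Continuous fun x : EuclideanSpace ℝ (Fin d) => Bpq p x v := by
    intro v
    unfold Bpq
    exact continuous_finset_sum _ fun i _ =>
      continuous_const.mul ((hcoordc i).mul continuous_const)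
  have hS_meas : MeasurableSet {x : EuclideanSpace ℝ (Fin d) | Qpq p x = ρ} :=
    hQc.measurable (measurableSet_singleton ρ)
  have hmap : ∀ j : Fin p, μ.map (projP (u j)) = ν.map (projP (u j)) := by
    intro j
    haveI : IsFiniteMeasure (μ.map (projP (u j))) := Measure.isFiniteMeasure_map μ _
    haveI : IsFiniteMeasure (ν.map (projP (u j))) := Measure.isFiniteMeasure_map ν _
    apply meas_ext_of_FT
    intro ξ
    have hcξ : Continuous fun y : EuclideanSpace ℝ (Fin d) =>
        Complex.exp (Complex.I * ((⟪y, ξ⟫ : ℝ) : ℂ)) :=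
      Complex.continuous_exp.comp (continuous_const.mul
        (Complex.continuous_ofReal.comp (Continuous.inner continuous_id continuous_const)))
    have hx : ∀ κ : Measure (EuclideanSpace ℝ (Fin d)),
        FT (κ.map (projP (u j))) ξ = FT κ (projP (u j) ξ) := by
      intro κ
      rw [FT_def, integral_map (projP (u j)).continuous.measurable.aemeasurable
        hcξ.aestronglyMeasurable, FT_def]
      exact integral_congr_ae (Filter.Eventually.of_forall fun x => by simp only [projP_inner])
    rw [hx μ, hx ν]
    exact hFT _ (Set.mem_iUnion.2 ⟨j, projP_inner_u _ _⟩)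
  have hgood : ∀ (j : Fin p) (E' : Set (EuclideanSpace ℝ (Fin d))), MeasurableSet E' →
      (∀ x ∈ E', Qpq p x = ρ) → (∀ x ∈ E', Bpq p x (u j) ≠ 0) → μ E' = ν E' := by
    intro j E' hE'm hE'S hE'B
    have hkey : ∀ y x, y ∈ E' → Qpq p x = ρ → projP (u j) y = projP (u j) x → x = y := by
      intro y x hyE hxS hPyx
      obtain ⟨t, rfl⟩ := projP_eq_iff hPyx.symm
      have hQ := Qpq_expand p y (u j) t
      rw [hQu0 j] at hQ
      have hyS : Qpq p y = ρ := hE'S y hyE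
      have ht2 : 2 * t * Bpq p y (u j) = 0 := by
        rw [hxS] at hQ; rw [hyS] at hQ; linarith
      have ht : t = 0 := by
        rcases mul_eq_zero.mp ht2 with h0 | h0
        · rcases mul_eq_zero.mp h0 with h0 | h0
          · norm_num at h0
          · exact h0
        · exact absurd h0 (hE'B y hyE)
      rw [ht, zero_smul, add_zero]
    have hinj : Set.InjOn (projP (u j)) E' := fun x hx y hy hxy =>
      hkey y x hy (hE'S x hx) hxy.symm
    have himg : MeasurableSet ((projP (u j)) '' E') :=
      hE'm.image_of_continuousOn_injOn (projP (u j)).continuous.continuousOn hinj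
    have hsub : (projP (u j)) ⁻¹' ((projP (u j)) '' E')
        ⊆ E' ∪ {x : EuclideanSpace ℝ (Fin d) | Qpq p x = ρ}ᶜ := by
      rintro x ⟨y, hyE, hPyx⟩
      by_cases hxS : Qpq p x = ρ
      · exact Or.inl ((hkey y x hyE hxS hPyx) ▸ hyE)
      · exact Or.inr hxS
    have hpre : ∀ κ : Measure (EuclideanSpace ℝ (Fin d)),
        κ {x : EuclideanSpace ℝ (Fin d) | Qpq p x = ρ}ᶜ = 0 →
        κ ((projP (u j)) ⁻¹' ((projP (u j)) '' E')) = κ E' := by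
      intro κ hκ
      refine le_antisymm ?_ (measure_mono (Set.subset_preimage_image _ E'))
      calc κ ((projP (u j)) ⁻¹' ((projP (u j)) '' E'))
          ≤ κ (E' ∪ {x : EuclideanSpace ℝ (Fin d) | Qpq p x = ρ}ᶜ) := measure_mono hsub
        _ ≤ κ E' + κ {x : EuclideanSpace ℝ (Fin d) | Qpq p x = ρ}ᶜ := measure_union_le _ _
        _ = κ E' := by rw [hκ, add_zero]
    calc μ E' = μ ((projP (u j)) ⁻¹' ((projP (u j)) '' E')) := (hpre μ hμS).symm
      _ = (μ.map (projP (u j))) ((projP (u j)) '' E') :=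
          (Measure.map_apply (projP (u j)).continuous.measurable himg).symm
      _ = (ν.map (projP (u j))) ((projP (u j)) '' E') := by rw [hmap j]
      _ = ν ((projP (u j)) ⁻¹' ((projP (u j)) '' E')) :=
          Measure.map_apply (projP (u j)).continuous.measurable himg
      _ = ν E' := hpre ν hνS
  set As : Fin p → Set (EuclideanSpace ℝ (Fin d)) := fun j =>
    ({x | Qpq p x = ρ} ∩ {x | Bpq p x (u j) ≠ 0}) ∩
      ⋂ i : Fin p, ⋂ (_ : i < j), {x | Bpq p x (u i) = 0} with hAs
  have hAsmeas : ∀ j, MeasurableSet (As j) := by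
    intro j
    refine (hS_meas.inter ?_).inter
      (MeasurableSet.iInter fun i => MeasurableSet.iInter fun _ =>
        (hBc (u i)).measurable (measurableSet_singleton 0))
    exact ((hBc (u j)).measurable (measurableSet_singleton 0)).compl
  have hAsS : ∀ j, As j ⊆ {x : EuclideanSpace ℝ (Fin d) | Qpq p x = ρ} :=
    fun j => fun x hx => hx.1.1
  have hcover : {x : EuclideanSpace ℝ (Fin d) | Qpq p x = ρ} = ⋃ j, As j := by
    apply Set.Subset.antisymm
    · intro x hx
      have hxρ : Qpq p x = ρ := hx
      have hex : ∃ j : Fin p, Bpq p x (u j) ≠ 0 := by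
        by_contra hcon
        push_neg at hcon
        have hall : ∀ j : Fin p, x (A j) = x (B j) := by
          intro j
          have hj := hcon j
          rw [hBval x j] at hj
          linarith
        have := Qpq_nonpos x A B hA hB hall
        linarith
      set T := Finset.univ.filter (fun j : Fin p => Bpq p x (u j) ≠ 0) with hT
      have hTne : T.Nonempty := by
        obtain ⟨j, hj⟩ := hex
        exact ⟨j, Finset.mem_filter.mpr ⟨Finset.mem_univ _, hj⟩⟩
      refine Set.mem_iUnion.mpr ⟨T.min' hTne,
        ⟨⟨hx, (Finset.mem_filter.mp (T.min'_mem hTne)).2⟩, ?_⟩⟩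
      refine Set.mem_iInter.mpr fun i => Set.mem_iInter.mpr fun hij => ?_
      by_contra hBi
      have hiT : i ∈ T := Finset.mem_filter.mpr ⟨Finset.mem_univ _, hBi⟩
      exact absurd (T.min'_le i hiT) (not_le.mpr hij)
    · exact Set.iUnion_subset fun j => hAsS j
  have hdisj : Pairwise (Function.onFun Disjoint As) := by
    have hlt : ∀ {i k : Fin p}, i < k → Disjoint (As i) (As k) := by
      intro i k hik
      refine Set.disjoint_left.mpr fun x hxi hxk => ?_
      have h1 : Bpq p x (u i) ≠ 0 := hxi.1.2
      have h2 : Bpq p x (u i) = 0 :=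
        (Set.mem_iInter.mp (Set.mem_iInter.mp hxk.2 i)) hik
      exact h1 h2
    intro i k hik
    rcases lt_or_gt_of_ne hik with h | h
    · exact hlt h
    · exact (hlt h).symm
  have hsplit : ∀ κ : Measure (EuclideanSpace ℝ (Fin d)),
      κ {x : EuclideanSpace ℝ (Fin d) | Qpq p x = ρ}ᶜ = 0 →
      ∀ s : Set (EuclideanSpace ℝ (Fin d)), MeasurableSet s →
      κ s = ∑' j : Fin p, κ (s ∩ As j) := by
    intro κ hκ s hs
    have h1 : κ s = κ (s ∩ {x | Qpq p x = ρ}) := by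
      refine le_antisymm ?_ (measure_mono Set.inter_subset_left)
      calc κ s
          ≤ κ ((s ∩ {x | Qpq p x = ρ}) ∪ {x : EuclideanSpace ℝ (Fin d) | Qpq p x = ρ}ᶜ) := by
            refine measure_mono fun x hx => ?_
            by_cases hxS : Qpq p x = ρ
            · exact Or.inl ⟨hx, hxS⟩
            · exact Or.inr hxS
        _ ≤ κ (s ∩ {x | Qpq p x = ρ}) + κ {x : EuclideanSpace ℝ (Fin d) | Qpq p x = ρ}ᶜ :=
            measure_union_le _ _
        _ = κ (s ∩ {x | Qpq p x = ρ}) := by rw [hκ, add_zero]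
    rw [h1, hcover, Set.inter_iUnion]
    exact measure_iUnion
      (fun i k hik => (hdisj hik).mono Set.inter_subset_right Set.inter_subset_right)
      (fun j => hs.inter (hAsmeas j))
  refine Measure.ext fun s hs => ?_
  rw [hsplit μ hμS s hs, hsplit ν hνS s hs]
  exact tsum_congr fun j =>
    hgood j (s ∩ As j) (hs.inter (hAsmeas j)) (fun x hx => hx.2.1.1) (fun x hx => hx.2.1.2)
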